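/- For the recursively defined functions φ_0(z) = e^z and φ_{k+1}(z) = (φ_k(z) - φ_k(0))/z (with φ_k(0) = 1/k!), one has for every k ≥ 1 and every complex number z the integral representation φ_k(z) = ∫_0^1 e^{(1-s)z} s^{k-1}/(k-1)! ds. -/

import Mathlib

open Complex intervalIntegral

private lemma phi_expDeriv (z : ℂ) (s : ℝ) :
    HasDerivAt (fun t : ℝ => Complex.exp ((1 - (t : ℂ)) * z))
      (Complex.exp ((1 - (s : ℂ)) * z) * (-z)) s := by
  have h : HasDerivAt (fun w : ℂ => Complex.exp ((1 - w) * z))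
      (Complex.exp ((1 - (s : ℂ)) * z) * (-z)) (s : ℂ) := by
    have h1 : HasDerivAt (fun w : ℂ => (1 - w) * z) (-z) (s : ℂ) := by
      simpa using (((hasDerivAt_id (s : ℂ)).const_sub 1).mul_const z)
    simpa using h1.cexp
  exact h.comp_ofReal

private lemma phi_cont (z : ℂ) (k : ℕ) :
    Continuous (fun s : ℝ => Complex.exp ((1 - (s : ℂ)) * z) * (s : ℂ) ^ k / (Nat.factorial k)) := by
  fun_prop

private lemma phi_int_zero (k : ℕ) :
    (∫ s in (0:ℝ)..1, Complex.exp ((1 - (s : ℂ)) * 0) * (s : ℂ) ^ k / (Nat.factorial k))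
      = 1 / (Nat.factorial (k + 1)) := by
  have h1 : ∀ s : ℝ, Complex.exp ((1 - (s : ℂ)) * 0) * (s : ℂ) ^ k / (Nat.factorial k)
      = (((s ^ k / (Nat.factorial k) : ℝ)) : ℂ) := by
    intro s; push_cast; simp
  simp_rw [h1, intervalIntegral.integral_ofReal]
  rw [intervalIntegral.integral_div, integral_pow]
  push_cast [Nat.factorial_succ]
  field_simp
  simp

private lemma phi_int_base (z : ℂ) (hz : z ≠ 0) :
    (∫ s in (0:ℝ)..1, Complex.exp ((1 - (s : ℂ)) * z) * (s : ℂ) ^ 0 / (Nat.factorial 0))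
      = (Complex.exp z - 1) / z := by
  have h : ∀ s ∈ Set.uIcc (0:ℝ) 1,
      HasDerivAt (fun t : ℝ => -Complex.exp ((1 - (t : ℂ)) * z) / z)
        (Complex.exp ((1 - (s : ℂ)) * z) * (s : ℂ) ^ 0 / (Nat.factorial 0)) s := by
    intro s _
    have := ((phi_expDeriv z s).neg).div_const z
    refine this.congr_deriv ?_
    field_simp
    simp
  rw [intervalIntegral.integral_eq_sub_of_hasDerivAt h ((phi_cont z 0).intervalIntegrable _ _)]
  simp
  field_simp
  ring

private lemma phi_int_rec (z : ℂ) (hz : z ≠ 0) (k : ℕ) :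
    (∫ s in (0:ℝ)..1, Complex.exp ((1 - (s : ℂ)) * z) * (s : ℂ) ^ (k + 1) / (Nat.factorial (k + 1)))
      = ((∫ s in (0:ℝ)..1, Complex.exp ((1 - (s : ℂ)) * z) * (s : ℂ) ^ k / (Nat.factorial k))
          - 1 / (Nat.factorial (k + 1))) / z := by
  set f1 : ℝ → ℂ := fun s => Complex.exp ((1 - (s : ℂ)) * z) * (s : ℂ) ^ (k + 1) / (Nat.factorial (k + 1)) with hf1
  set f0 : ℝ → ℂ := fun s => Complex.exp ((1 - (s : ℂ)) * z) * (s : ℂ) ^ k / (Nat.factorial k) with hf0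
  have hd : ∀ s ∈ Set.uIcc (0:ℝ) 1,
      HasDerivAt (fun t : ℝ => -Complex.exp ((1 - (t : ℂ)) * z) * (t : ℂ) ^ (k + 1) / ((Nat.factorial (k + 1)) * z))
        (f1 s - f0 s / z) s := by
    intro s _
    have hp : HasDerivAt (fun t : ℝ => (t : ℂ) ^ (k + 1)) (((k : ℂ) + 1) * (s : ℂ) ^ k) s := by
      have := (hasDerivAt_pow (k + 1) (s : ℂ)).comp_ofReal
      simpa using this
    have := (((phi_expDeriv z s).neg).mul hp).div_const ((Nat.factorial (k + 1) : ℂ) * z)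
    refine this.congr_deriv ?_
    have hk1 : ((Nat.factorial (k + 1) : ℂ)) = ((k : ℂ) + 1) * (Nat.factorial k : ℂ) := by
      push_cast [Nat.factorial_succ]; ring
    have hne : (Nat.factorial k : ℂ) ≠ 0 := by exact_mod_cast Nat.factorial_ne_zero k
    have hne1 : (Nat.factorial (k+1) : ℂ) ≠ 0 := by exact_mod_cast Nat.factorial_ne_zero (k+1)
    simp only [hf1, hf0, Pi.neg_apply]
    field_simp
    rw [hk1]
    ring
  have hcont : Continuous (fun s : ℝ => f1 s - f0 s / z) := by
    simp only [hf1, hf0]; fun_prop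
  have hint : (∫ s in (0:ℝ)..1, (f1 s - f0 s / z)) = -1 / ((Nat.factorial (k + 1) : ℂ) * z) := by
    rw [intervalIntegral.integral_eq_sub_of_hasDerivAt hd (hcont.intervalIntegrable _ _)]
    norm_num
  have hi1 : IntervalIntegrable f1 MeasureTheory.volume 0 1 := (phi_cont z (k+1)).intervalIntegrable _ _
  have hi0 : IntervalIntegrable (fun s => f0 s / z) MeasureTheory.volume 0 1 :=
    ((phi_cont z k).div_const z).intervalIntegrable _ _
  rw [intervalIntegral.integral_sub hi1 hi0] at hint
  simp only [hf1, hf0, div_div, intervalIntegral.integral_div] at hint ⊢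
  rw [eq_div_iff hz]
  linear_combination z * hint +
    ((∫ x in (0:ℝ)..1, Complex.exp ((1 - (x:ℂ)) * z) * (x:ℂ) ^ k) * ((Nat.factorial k : ℂ))⁻¹
      - ((Nat.factorial (k+1) : ℂ))⁻¹) * (mul_inv_cancel₀ hz)

/-- Integral representation of the φ-functions:
φ_0(z) = e^z, φ_{k+1}(z) = (φ_k(z) - φ_k(0))/z with φ_k(0) = 1/k!, then for k ≥ 1,
φ_k(z) = ∫_0^1 e^{(1-s)z} s^{k-1}/(k-1)! ds. -/
theorem phi_integral_representation
    (φ : ℕ → ℂ → ℂ)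
    (h0 : ∀ z : ℂ, φ 0 z = Complex.exp z)
    (hz0 : ∀ k : ℕ, φ k 0 = 1 / (Nat.factorial k))
    (hrec : ∀ k : ℕ, ∀ z : ℂ, z ≠ 0 → φ (k + 1) z = (φ k z - 1 / (Nat.factorial k)) / z) :
    ∀ k : ℕ, 1 ≤ k → ∀ z : ℂ,
      φ k z = ∫ s in (0:ℝ)..1,
        Complex.exp ((1 - (s : ℂ)) * z) * (s : ℂ) ^ (k - 1) / (Nat.factorial (k - 1)) := by
  have key : ∀ k : ℕ, ∀ z : ℂ,
      φ (k + 1) z = ∫ s in (0:ℝ)..1,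
        Complex.exp ((1 - (s : ℂ)) * z) * (s : ℂ) ^ k / (Nat.factorial k) := by
    intro k
    induction k with
    | zero =>
      intro z
      by_cases hz : z = 0
      · subst hz
        rw [phi_int_zero 0, hz0]
      · rw [phi_int_base z hz, hrec 0 z hz, h0]
        norm_num
    | succ k ih =>
      intro z
      by_cases hz : z = 0
      · subst hz
        rw [phi_int_zero (k + 1), hz0]
      · rw [phi_int_rec z hz k, hrec (k + 1) z hz, ih z]
  intro k hk z
  match k, hk with
  | (n + 1), _ => simpa using key n z
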